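/- Optimality of r = 1 for sampled SUE: for every real ε > 0, all positive integers n and d, and every integer r with 1 ≤ r ≤ d, the sampled SUE variance satisfies d·e^{ε/2}/(n·(e^{ε/2} − 1)²) ≤ d·e^{ε/(2r)}/(n·r·(e^{ε/(2r)} − 1)²); that is, σ²₂,SUE(r) = d·e^{ε/(2r)}/(n·r·(e^{ε/(2r)} − 1)²) attains its minimum over r ∈ {1, …, d} at r = 1. -/

import Mathlib

/-- `sinh` is superadditive: `k * sinh y ≤ sinh (k * y)` for `y ≥ 0`. -/
lemma sinh_nat_mul_le (k : ℕ) (y : ℝ) (hy : 0 ≤ y) :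
    (k : ℝ) * Real.sinh y ≤ Real.sinh ((k : ℝ) * y) := by
  induction k with
  | zero => simp
  | succ m ih =>
    have hs : 0 ≤ Real.sinh y := Real.sinh_nonneg_iff.2 hy
    have hs' : 0 ≤ Real.sinh ((m : ℝ) * y) := Real.sinh_nonneg_iff.2 (by positivity)
    have h1 : (1 : ℝ) ≤ Real.cosh y := Real.one_le_cosh y
    have h2 : (1 : ℝ) ≤ Real.cosh ((m : ℝ) * y) := Real.one_le_cosh _
    have heq : ((m : ℝ) + 1) * y = (m : ℝ) * y + y := by ring
    rw [Nat.cast_succ, heq, Real.sinh_add]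
    nlinarith

/-- `(e^a - 1)^2 = e^a * (2 sinh (a/2))^2`. -/
lemma exp_sub_one_sq (a : ℝ) :
    (Real.exp a - 1) ^ 2 = Real.exp a * (2 * Real.sinh (a / 2)) ^ 2 := by
  rw [Real.sinh_eq]
  have h1 : Real.exp (a / 2) * Real.exp (a / 2) = Real.exp a := by
    rw [← Real.exp_add]; ring_nf
  have h2 : Real.exp (a / 2) * Real.exp (-(a / 2)) = 1 := by
    rw [← Real.exp_add]; simp
  nlinarith [Real.exp_pos a, Real.exp_pos (a / 2)]

/-- Optimality of `r = 1` for sampled SUE: the sampled SUE variance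
`σ²₂,SUE(r) = d·e^{ε/(2r)}/(n·r·(e^{ε/(2r)} − 1)²)` attains its minimum
over `r ∈ {1, …, d}` at `r = 1`. -/
theorem sampled_sue_optimal_r_one (ε : ℝ) (hε : 0 < ε) (n d : ℕ) (hn : 0 < n) (hd : 0 < d)
    (r : ℕ) (hr1 : 1 ≤ r) (hrd : r ≤ d) :
    (d : ℝ) * Real.exp (ε / 2) / ((n : ℝ) * (Real.exp (ε / 2) - 1) ^ 2)
      ≤ (d : ℝ) * Real.exp (ε / (2 * (r : ℝ)))
          / ((n : ℝ) * (r : ℝ) * (Real.exp (ε / (2 * (r : ℝ))) - 1) ^ 2) := by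
  have hrR : (0 : ℝ) < r := by exact_mod_cast hr1
  have hnR : (0 : ℝ) < n := by exact_mod_cast hn
  have hdR : (0 : ℝ) < d := by exact_mod_cast hd
  set s := Real.sinh (ε / (2 * (r : ℝ)) / 2) with hsdef
  set S := Real.sinh (ε / 2 / 2) with hSdef
  have hy : 0 ≤ ε / (2 * (r : ℝ)) / 2 := by positivity
  have hs : 0 < s := Real.sinh_pos_iff.2 (by positivity)
  have hS : 0 < S := Real.sinh_pos_iff.2 (by positivity)
  -- superadditivity gives r * s ≤ S
  have hkey : (r : ℝ) * s ≤ S := by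
    have := sinh_nat_mul_le r (ε / (2 * (r : ℝ)) / 2) hy
    have heq : (r : ℝ) * (ε / (2 * (r : ℝ)) / 2) = ε / 2 / 2 := by
      field_simp
    rwa [heq] at this
  have hr1R : (1 : ℝ) ≤ (r : ℝ) := by exact_mod_cast hr1
  have hsq : (r : ℝ) * s ^ 2 ≤ S ^ 2 := by
    have h2 : ((r : ℝ) * s) ^ 2 ≤ S ^ 2 :=
      pow_le_pow_left₀ (by positivity) hkey 2
    nlinarith [sq_nonneg s]
  -- rewrite both sides
  rw [exp_sub_one_sq (ε / 2), exp_sub_one_sq (ε / (2 * (r : ℝ)))]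
  have heL : (d : ℝ) * Real.exp (ε / 2) /
      ((n : ℝ) * (Real.exp (ε / 2) * (2 * S) ^ 2)) = d / (4 * n * S ^ 2) := by
    rw [hSdef]
    field_simp
    ring
  have heR : (d : ℝ) * Real.exp (ε / (2 * (r : ℝ))) /
      ((n : ℝ) * (r : ℝ) * (Real.exp (ε / (2 * (r : ℝ))) * (2 * s) ^ 2))
      = d / (4 * n * ((r : ℝ) * s ^ 2)) := by
    rw [hsdef]
    field_simp
    ring
  rw [heL, heR]
  gcongr
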